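/- All zeros of the polynomial s_n(z) = z^n S_{2n−1}(π/√z) are real and positive, and they are simple. -/

import Mathlib

open Real Polynomial

noncomputable section SAux

/-- `sA m = 1/((2m+1)(2m+3))`, so that the recurrence coefficient at step `m` is
`sA (m+1) = 1/((2m+3)(2m+5))`. -/
def sA (m : ℕ) : ℝ := 1 / ((2 * (m : ℝ) + 1) * (2 * (m : ℝ) + 3))

def sc : ℕ → ℝ
  | 0 => π ^ 2 * sA 1
  | (k + 1) => π ^ 2 * (sA (2 * k + 2) + sA (2 * k + 3))

def slam : ℕ → ℝ
  | 0 => 1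
  | (k + 1) => π ^ 4 * (sA (2 * k + 2) * sA (2 * k + 1))

def salpha : ℕ → ℝ
  | 0 => 0
  | (k + 1) => sA (2 * k + 2) / (sA (2 * k + 2) + sA (2 * k + 3))

def sP : ℕ → Polynomial ℝ
  | 0 => 1
  | 1 => X - C (sc 0)
  | (k + 2) => (X - C (sc (k + 1))) * sP (k + 1) - C (slam (k + 1)) * sP k

lemma sA_pos (m : ℕ) : 0 < sA m := by
  have h1 : (0:ℝ) < 2 * (m:ℝ) + 1 := by positivity
  have h2 : (0:ℝ) < 2 * (m:ℝ) + 3 := by positivity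
  exact div_pos one_pos (mul_pos h1 h2)

lemma sc_pos (k : ℕ) : 0 < sc k := by
  cases k with
  | zero => exact mul_pos (by positivity) (sA_pos 1)
  | succ k => exact mul_pos (by positivity) (add_pos (sA_pos _) (sA_pos _))

lemma slam_pos (k : ℕ) : 0 < slam k := by
  cases k with
  | zero => exact one_pos
  | succ k => exact mul_pos (by positivity) (mul_pos (sA_pos _) (sA_pos _))

lemma salpha_nonneg (k : ℕ) : 0 ≤ salpha k := by
  cases k with
  | zero => norm_num [salpha]
  | succ k => exact div_nonneg (sA_pos _).le (add_pos (sA_pos _) (sA_pos _)).le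

lemma salpha_lt_one (k : ℕ) : salpha k < 1 := by
  cases k with
  | zero => norm_num [salpha]
  | succ k =>
      have h := add_pos (sA_pos (2*k+2)) (sA_pos (2*k+3))
      have : sA (2*k+2) < sA (2*k+2) + sA (2*k+3) := by
        have := sA_pos (2*k+3); linarith
      exact (div_lt_one h).mpr this

lemma schain (k : ℕ) :
    slam (k + 1) = (1 - salpha k) * (salpha (k + 1) * (sc k * sc (k + 1))) := by
  cases k with
  | zero =>
      have h := add_pos (sA_pos 2) (sA_pos 3)
      show π ^ 4 * (sA 2 * sA 1)
        = (1 - 0) * (sA 2 / (sA 2 + sA 3) * (π ^ 2 * sA 1 * (π ^ 2 * (sA 2 + sA 3))))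
      field_simp
      ring
  | succ k =>
      have h1 := add_pos (sA_pos (2*k+2)) (sA_pos (2*k+3))
      have h2 := add_pos (sA_pos (2*(k+1)+2)) (sA_pos (2*(k+1)+3))
      show π ^ 4 * (sA (2*(k+1)+2) * sA (2*(k+1)+1))
        = (1 - sA (2*k+2) / (sA (2*k+2) + sA (2*k+3)))
          * (sA (2*(k+1)+2) / (sA (2*(k+1)+2) + sA (2*(k+1)+3))
            * (π ^ 2 * (sA (2*k+2) + sA (2*k+3)) * (π ^ 2 * (sA (2*(k+1)+2) + sA (2*(k+1)+3)))))
      have e1 : 2*(k+1)+1 = 2*k+3 := by ring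
      rw [e1]
      field_simp
      ring

end SAux

section SAux2

lemma sP_eval_rec (k : ℕ) (t : ℝ) :
    (sP (k + 2)).eval t
      = (t - sc (k + 1)) * (sP (k + 1)).eval t - slam (k + 1) * (sP k).eval t := by
  simp [sP]

lemma sP_zero : sP 0 = 1 := rfl
lemma sP_one : sP 1 = X - C (sc 0) := rfl

/-- negativity on `(-∞, 0]` with the chain-sequence bound. -/
lemma sP_neg_aux : ∀ k : ℕ, ∀ t : ℝ, t ≤ 0 →
    0 < (-1 : ℝ) ^ k * (sP k).eval t ∧
    (1 - salpha k) * ((sc k - t) * ((-1 : ℝ) ^ k * (sP k).eval t))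
      ≤ (-1 : ℝ) ^ (k + 1) * (sP (k + 1)).eval t := by
  intro k
  induction k with
  | zero =>
      intro t ht
      constructor
      · norm_num [sP]
      · simp [sP, salpha]
  | succ k ih =>
      intro t ht
      obtain ⟨hpos, hineq⟩ := ih t ht
      set w0 := (-1 : ℝ) ^ k * (sP k).eval t with hw0
      set w1 := (-1 : ℝ) ^ (k + 1) * (sP (k + 1)).eval t with hw1
      set w2 := (-1 : ℝ) ^ (k + 2) * (sP (k + 2)).eval t with hw2def
      have hw2 : w2 = (sc (k + 1) - t) * w1 - slam (k + 1) * w0 := by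
        rw [hw2def, hw1, hw0, sP_eval_rec]
        ring
      have hck : 0 < sc k := sc_pos k
      have hck1 : 0 < sc (k + 1) := sc_pos (k + 1)
      have ha0 : 0 ≤ salpha k := salpha_nonneg k
      have ha1 : salpha k < 1 := salpha_lt_one k
      have hb0 : 0 ≤ salpha (k + 1) := salpha_nonneg (k + 1)
      have hb1 : salpha (k + 1) < 1 := salpha_lt_one (k + 1)
      have hch := schain k
      have hw1pos : 0 < w1 := by
        have h0 : 0 < (1 - salpha k) * ((sc k - t) * w0) :=
          mul_pos (by linarith) (mul_pos (by linarith) hpos)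
        linarith
      constructor
      · exact hw1pos
      · rw [hw2]
        have key : (1 - salpha k) * (sc k * w0) ≤ w1 := by nlinarith
        nlinarith [mul_le_mul_of_nonneg_left key (mul_nonneg hb0 hck1.le),
          mul_nonneg (mul_nonneg hb0 (neg_nonneg.mpr ht)) hw1pos.le]

lemma sP_neg (k : ℕ) (t : ℝ) (ht : t ≤ 0) : 0 < (-1 : ℝ) ^ k * (sP k).eval t :=
  (sP_neg_aux k t ht).1

end SAux2

section SAux3

lemma sP_monic_natDegree : ∀ k : ℕ, (sP k).Monic ∧ (sP k).natDegree = k := by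
  intro k
  induction k using Nat.strong_induction_on with
  | _ k ih =>
    match k with
    | 0 => exact ⟨monic_one, natDegree_one⟩
    | 1 => exact ⟨monic_X_sub_C _, natDegree_X_sub_C _⟩
    | (k + 2) =>
        obtain ⟨hm1, hd1⟩ := ih (k + 1) (by omega)
        obtain ⟨hm0, hd0⟩ := ih k (by omega)
        have hA : ((X - C (sc (k + 1))) * sP (k + 1)).Monic := (monic_X_sub_C _).mul hm1
        have hdA : ((X - C (sc (k + 1))) * sP (k + 1)).natDegree = k + 2 := by
          rw [natDegree_mul (X_sub_C_ne_zero _) hm1.ne_zero, natDegree_X_sub_C, hd1]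
          omega
        have hdB : (C (slam (k + 1)) * sP k).degree
            < ((X - C (sc (k + 1))) * sP (k + 1)).degree := by
          refine lt_of_le_of_lt (degree_mul_le _ _) ?_
          rw [degree_eq_natDegree hA.ne_zero, hdA]
          have h1 : (C (slam (k + 1))).degree ≤ 0 := degree_C_le
          have h2 : (sP k).degree ≤ (k : WithBot ℕ) := by simpa [hd0] using (degree_le_natDegree (p := sP k))
          refine lt_of_le_of_lt (add_le_add h1 h2) ?_
          rw [zero_add]
          exact_mod_cast (by omega : k < k + 2)
        have hmonic : (sP (k + 2)).Monic := by
          show ((X - C (sc (k + 1))) * sP (k + 1) - C (slam (k + 1)) * sP k).Monic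
          rw [sub_eq_add_neg]
          exact hA.add_of_left (by rwa [degree_neg])
        refine ⟨hmonic, ?_⟩
        show ((X - C (sc (k + 1))) * sP (k + 1) - C (slam (k + 1)) * sP k).natDegree = k + 2
        exact (natDegree_eq_of_degree_eq (degree_sub_eq_left_of_degree_lt hdB)).trans hdA

/-- the product of `k` negative reals has sign `(-1)^k`. -/
lemma prod_neg_sign : ∀ (k : ℕ) (f : Fin k → ℝ), (∀ j, f j < 0) →
    0 < (-1 : ℝ) ^ k * ∏ j, f j := by
  intro k
  induction k with
  | zero => intro f _; simp
  | succ k ih =>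
      intro f hf
      have h := ih (fun j => f j.succ) (fun j => hf _)
      have h0 := hf 0
      rw [Fin.prod_univ_succ, pow_succ]
      nlinarith

lemma ivt_root (f : Polynomial ℝ) {a b : ℝ} (hab : a < b)
    (h : f.eval a * f.eval b < 0) : ∃ x, a < x ∧ x < b ∧ f.eval x = 0 := by
  have hc : ContinuousOn (fun x => f.eval x) (Set.Icc a b) := f.continuous.continuousOn
  rcases mul_neg_iff.mp h with ⟨hpa, hnb⟩ | ⟨hna, hpb⟩
  · have : (0:ℝ) ∈ Set.Ioo (f.eval b) (f.eval a) := ⟨hnb, hpa⟩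
    obtain ⟨x, hx, hfx⟩ := intermediate_value_Ioo' hab.le hc this
    exact ⟨x, hx.1, hx.2, hfx⟩
  · have : (0:ℝ) ∈ Set.Ioo (f.eval a) (f.eval b) := ⟨hna, hpb⟩
    obtain ⟨x, hx, hfx⟩ := intermediate_value_Ioo hab.le hc this
    exact ⟨x, hx.1, hx.2, hfx⟩

lemma factor_of_roots {k : ℕ} (f : Polynomial ℝ) (hm : f.Monic) (hdeg : f.natDegree = k)
    (r : Fin k → ℝ) (hinj : Function.Injective r) (hr : ∀ i, f.eval (r i) = 0) :
    f = ∏ i, (X - C (r i)) := by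
  have hf0 : f ≠ 0 := hm.ne_zero
  set m : Multiset ℝ := Finset.univ.val.map r with hm_def
  have hnodup : m.Nodup := Multiset.Nodup.map hinj Finset.univ.nodup
  have hsub : m ⊆ f.roots := by
    intro a ha
    rw [hm_def, Multiset.mem_map] at ha
    obtain ⟨i, _, rfl⟩ := ha
    exact (mem_roots hf0).mpr (hr i)
  have hle : m ≤ f.roots := (Multiset.le_iff_subset hnodup).mpr hsub
  have hcardm : Multiset.card m = k := by
    rw [hm_def, Multiset.card_map]; simp
  have hcard : Multiset.card f.roots ≤ k := hdeg ▸ f.card_roots'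
  have hroots : f.roots = m := (Multiset.eq_of_le_of_card_le hle (by omega)).symm
  have := prod_multiset_X_sub_C_of_monic_of_roots_card_eq hm (by rw [hroots, hcardm, hdeg])
  rw [← this, hroots, hm_def, Multiset.map_map]
  rw [Finset.prod_eq_multiset_prod]
  rfl

end SAux3

section SAux4

def SInvP (k : ℕ) : Prop :=
  ∃ (r : Fin (k + 1) → ℝ) (q : Fin k → ℝ),
    (∀ j : Fin k, r j.castSucc < q j ∧ q j < r j.succ) ∧ 0 < r 0 ∧
    sP (k + 1) = ∏ i, (X - C (r i)) ∧ sP k = ∏ j, (X - C (q j))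

lemma sInv : ∀ k : ℕ, SInvP k := by
  intro k
  induction k with
  | zero =>
      refine ⟨fun _ => sc 0, Fin.elim0, fun j => j.elim0, sc_pos 0, ?_, ?_⟩
      · rw [Fin.prod_univ_one]; rfl
      · simp [sP]
  | succ k ih =>
      obtain ⟨r, q, hint, hr0, hfac1, hfac0⟩ := ih
      have hmono : StrictMono r :=
        Fin.strictMono_iff_lt_succ.mpr fun j => lt_trans (hint j).1 (hint j).2
      -- roots of sP (k+1)
      have hroot1 : ∀ i, (sP (k + 1)).eval (r i) = 0 := by
        intro i
        rw [hfac1, eval_prod]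
        exact Finset.prod_eq_zero (Finset.mem_univ i) (by simp)
      -- eval of sP k as a product
      have hev0 : ∀ t : ℝ, (sP k).eval t = ∏ j, (t - q j) := by
        intro t; rw [hfac0, eval_prod]; simp
      -- eval of sP (k+2) at the roots of sP (k+1)
      have hE : ∀ i, (sP (k + 2)).eval (r i) = -slam (k + 1) * ∏ j, (r i - q j) := by
        intro i
        rw [sP_eval_rec, hroot1, hev0]; ring
      -- sign facts for the factors
      have hposf : ∀ (i : Fin (k + 1)) (j : Fin k), (j : ℕ) < (i : ℕ) → 0 < r i - q j := by
        intro i j hij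
        have h1 : q j < r j.succ := (hint j).2
        have h2 : r j.succ ≤ r i := hmono.monotone (by
          rw [Fin.le_def]; simpa using hij)
        linarith
      have hnegf : ∀ (i : Fin (k + 1)) (j : Fin k), (i : ℕ) ≤ (j : ℕ) → r i - q j < 0 := by
        intro i j hij
        have h1 : r j.castSucc < q j := (hint j).1
        have h2 : r i ≤ r j.castSucc := hmono.monotone (by
          rw [Fin.le_def]; simpa using hij)
        linarith
      have hlam := slam_pos (k + 1)
      -- consecutive evaluations have opposite signs
      have hEE : ∀ i : Fin k,
          (sP (k + 2)).eval (r i.castSucc) * (sP (k + 2)).eval (r i.succ) < 0 := by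
        intro i
        rw [hE, hE]
        have : (-slam (k + 1) * ∏ j, (r i.castSucc - q j)) *
            (-slam (k + 1) * ∏ j, (r i.succ - q j))
            = slam (k + 1) ^ 2 * ∏ j, ((r i.castSucc - q j) * (r i.succ - q j)) := by
          rw [Finset.prod_mul_distrib]; ring
        rw [this]
        have hprod : ∏ j, ((r i.castSucc - q j) * (r i.succ - q j)) < 0 := by
          rw [← Finset.mul_prod_erase Finset.univ _ (Finset.mem_univ i)]
          have hneg : (r i.castSucc - q i) * (r i.succ - q i) < 0 := by
            have h1 : r i.castSucc - q i < 0 := hnegf _ _ (by simp)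
            have h2 : 0 < r i.succ - q i := hposf _ _ (by simp)
            exact mul_neg_of_neg_of_pos h1 h2
          have hpos : 0 < ∏ j ∈ Finset.univ.erase i, ((r i.castSucc - q j) * (r i.succ - q j)) := by
            refine Finset.prod_pos ?_
            intro j hj
            have hji : j ≠ i := (Finset.mem_erase.mp hj).1
            rcases lt_or_ge (j : ℕ) (i : ℕ) with h | h
            · have p1 := hposf i.castSucc j (by simpa using h)
              have p2 := hposf i.succ j (by simp; omega)
              exact mul_pos p1 p2
            · have h' : (i : ℕ) < (j : ℕ) := lt_of_le_of_ne h
                (fun hh => hji (Fin.ext hh.symm))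
              have p1 := hnegf i.castSucc j (by simp; omega)
              have p2 := hnegf i.succ j (by simp; omega)
              exact mul_pos_of_neg_of_neg p1 p2
          exact mul_neg_of_neg_of_pos hneg hpos
        exact mul_neg_of_pos_of_neg (by positivity) hprod
      -- top evaluation is negative
      have hEtop : (sP (k + 2)).eval (r (Fin.last k)) < 0 := by
        rw [hE]
        have hpos : 0 < ∏ j, (r (Fin.last k) - q j) :=
          Finset.prod_pos fun j _ => hposf _ _ (by simp)
        nlinarith
      -- bottom: sP (k+2) at 0 and at r 0 have opposite signs
      have hbot : (sP (k + 2)).eval 0 * (sP (k + 2)).eval (r 0) < 0 := by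
        have h1 : 0 < (-1 : ℝ) ^ (k + 2) * (sP (k + 2)).eval 0 := sP_neg (k + 2) 0 le_rfl
        have h2 : 0 < (-1 : ℝ) ^ (k + 1) * (sP (k + 2)).eval (r 0) := by
          rw [hE]
          have hprod : 0 < (-1 : ℝ) ^ k * ∏ j, (r 0 - q j) :=
            prod_neg_sign k _ fun j => hnegf 0 j (by simp)
          have : (-1 : ℝ) ^ (k + 1) * (-slam (k + 1) * ∏ j, (r 0 - q j))
              = slam (k + 1) * ((-1 : ℝ) ^ k * ∏ j, (r 0 - q j)) := by ring
          rw [this]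
          exact mul_pos hlam hprod
        have h3 := mul_pos h1 h2
        have h4 : ((-1 : ℝ) ^ (k + 2) * (sP (k + 2)).eval 0) *
            ((-1 : ℝ) ^ (k + 1) * (sP (k + 2)).eval (r 0))
            = ((-1 : ℝ) ^ (2 * k + 3)) * ((sP (k + 2)).eval 0 * (sP (k + 2)).eval (r 0)) := by
          rw [show 2 * k + 3 = (k + 2) + (k + 1) by ring, pow_add]; ring
        rw [h4, Odd.neg_one_pow ⟨k + 1, by ring⟩] at h3
        linarith
      -- a point above all roots where sP (k+2) is positive
      obtain ⟨hm2, hd2⟩ := sP_monic_natDegree (k + 2)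
      have htend : Filter.Tendsto (fun x => (sP (k + 2)).eval x) Filter.atTop Filter.atTop := by
        refine Polynomial.tendsto_atTop_of_leadingCoeff_nonneg _ ?_ ?_
        · rw [degree_eq_natDegree hm2.ne_zero, hd2]
          exact_mod_cast Nat.succ_pos _
        · rw [hm2.leadingCoeff]; exact zero_le_one
      obtain ⟨M, hM1, hM2⟩ :=
        ((htend.eventually_gt_atTop 0).and (Filter.eventually_gt_atTop (r (Fin.last k)))).exists
      -- construct the new roots
      obtain ⟨x0, hx0a, hx0b, hx0⟩ := ivt_root (sP (k + 2)) hr0 hbot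
      have hmid : ∀ i : Fin k, ∃ x, r i.castSucc < x ∧ x < r i.succ ∧
          (sP (k + 2)).eval x = 0 :=
        fun i => ivt_root _ (hmono (Fin.castSucc_lt_succ (i := i))) (hEE i)
      choose mid hmid1 hmid2 hmid3 using hmid
      obtain ⟨xt, hxta, hxtb, hxt⟩ := ivt_root (sP (k + 2)) hM2
        (mul_neg_of_neg_of_pos hEtop hM1)
      set r' : Fin (k + 2) → ℝ := Fin.cons x0 (Fin.snoc mid xt) with hr'
      have hlow : ∀ j : Fin (k + 1), r' j.castSucc < r j := by
        intro j
        induction j using Fin.cases with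
        | zero => simpa [hr'] using hx0b
        | succ i =>
            rw [← Fin.succ_castSucc]
            simpa [hr', Fin.snoc_castSucc] using hmid2 i
      have hhigh : ∀ j : Fin (k + 1), r j < r' j.succ := by
        intro j
        induction j using Fin.lastCases with
        | last =>
            show r (Fin.last k) < r' ((Fin.last k).succ)
            rw [hr', Fin.cons_succ, Fin.snoc_last]
            exact hxta
        | cast i => simp only [hr', Fin.cons_succ, Fin.snoc_castSucc]; exact hmid1 i
      have hroot' : ∀ j : Fin (k + 2), (sP (k + 2)).eval (r' j) = 0 := by
        intro j
        induction j using Fin.cases with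
        | zero => simpa [hr'] using hx0
        | succ i =>
            induction i using Fin.lastCases with
            | last =>
                show (sP (k + 2)).eval (r' ((Fin.last k).succ)) = 0
                rw [hr', Fin.cons_succ, Fin.snoc_last]
                exact hxt
            | cast i => simpa [hr', Fin.snoc_castSucc] using hmid3 i
      have hmono' : StrictMono r' :=
        Fin.strictMono_iff_lt_succ.mpr fun j => lt_trans (hlow j) (hhigh j)
      have hfac2 : sP (k + 2) = ∏ i, (X - C (r' i)) :=
        factor_of_roots _ hm2 hd2 r' hmono'.injective hroot'
      exact ⟨r', r, fun j => ⟨hlow j, hhigh j⟩, by simpa [hr'] using hx0a, hfac2, hfac1⟩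

end SAux4

section SMain

lemma sP_eval_T (T : ℕ → ℝ → ℝ)
    (hT0 : ∀ x, T 0 x = 1) (hT1 : ∀ x, T 1 x = 1)
    (hTrec : ∀ (n : ℕ) (x : ℝ),
      T (n + 2) x = T (n + 1) x - x ^ 2 / ((2 * (n : ℝ) + 3) * (2 * (n : ℝ) + 5)) * T n x) :
    ∀ k : ℕ, ∀ z : ℝ, 0 < z → (sP k).eval z = z ^ k * T (2 * k) (π / Real.sqrt z) := by
  have hTrec' : ∀ (m : ℕ) (x : ℝ), T (m + 2) x = T (m + 1) x - x ^ 2 * sA (m + 1) * T m x := by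
    intro m x
    rw [hTrec m x, sA]
    push_cast
    ring_nf
  intro k
  induction k using Nat.strong_induction_on with
  | _ k ih =>
    match k with
    | 0 =>
        intro z hz
        simp [sP, hT0]
    | 1 =>
        intro z hz
        have hx2 : (π / Real.sqrt z) ^ 2 = π ^ 2 / z := by
          rw [div_pow, Real.sq_sqrt hz.le]
        have : T 2 (π / Real.sqrt z) = 1 - (π / Real.sqrt z) ^ 2 * sA 1 := by
          rw [hTrec' 0, hT0, hT1]; ring
        rw [show (2 : ℕ) * 1 = 2 from rfl, this, hx2]
        show (X - C (sc 0)).eval z = z ^ 1 * (1 - π ^ 2 / z * sA 1)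
        rw [show sc 0 = π ^ 2 * sA 1 from rfl]
        simp only [eval_sub, eval_X, eval_C, pow_one]
        field_simp
    | (k + 2) =>
        intro z hz
        have ih1 := ih (k + 1) (by omega) z hz
        have ih0 := ih k (by omega) z hz
        set x := π / Real.sqrt z with hxdef
        have hx2 : x ^ 2 = π ^ 2 / z := by
          rw [hxdef, div_pow, Real.sq_sqrt hz.le]
        have e1 := hTrec' (2 * k + 2) x
        have e2 := hTrec' (2 * k + 1) x
        have e3 := hTrec' (2 * k) x
        have hT4 : T (2 * (k + 2)) x
            = (1 - x ^ 2 * (sA (2 * k + 2) + sA (2 * k + 3))) * T (2 * (k + 1)) x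
              - x ^ 2 * sA (2 * k + 2) * (x ^ 2 * sA (2 * k + 1)) * T (2 * k) x := by
          have h21 : T (2 * k + 1) x = T (2 * k + 2) x + x ^ 2 * sA (2 * k + 1) * T (2 * k) x := by
            rw [e3]; ring
          calc T (2 * (k + 2)) x = T (2 * k + 2 + 2) x := by ring_nf
            _ = T (2 * k + 3) x - x ^ 2 * sA (2 * k + 3) * T (2 * k + 2) x := e1
            _ = T (2 * k + 2) x - x ^ 2 * sA (2 * k + 2) * T (2 * k + 1) x
                - x ^ 2 * sA (2 * k + 3) * T (2 * k + 2) x := by rw [e2]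
            _ = _ := by
                rw [h21, show 2 * (k + 1) = 2 * k + 2 from rfl]; ring
        rw [sP_eval_rec, ih1, ih0, hT4, hx2]
        rw [show sc (k + 1) = π ^ 2 * (sA (2 * k + 2) + sA (2 * k + 3)) from rfl,
          show slam (k + 1) = π ^ 4 * (sA (2 * k + 2) * sA (2 * k + 1)) from rfl]
        field_simp
        ring

end SMain

/-- All zeros of the polynomial `s_n(z) = z^n S_{2n−1}(π/√z)` are real, positive and
simple.  Here `T (n+1) x = S_n(x)` encodes `S_{−1} = S_0 = 1`,
`S_{n+1}(x) = S_n(x) − (x²/((2n+3)(2n+5))) S_{n−1}(x)`, and `p` is any nonzero real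
polynomial agreeing with `s_n` on `(0, ∞)`. -/
theorem s_zeros_real_positive_simple (T : ℕ → ℝ → ℝ)
    (hT0 : ∀ x, T 0 x = 1) (hT1 : ∀ x, T 1 x = 1)
    (hTrec : ∀ (n : ℕ) (x : ℝ),
      T (n + 2) x = T (n + 1) x - x ^ 2 / ((2 * (n : ℝ) + 3) * (2 * (n : ℝ) + 5)) * T n x)
    (n : ℕ) (p : Polynomial ℝ) (hp : p ≠ 0)
    (hpe : ∀ z : ℝ, 0 < z → p.eval z = z ^ n * T (2 * n) (π / Real.sqrt z)) :
    (∀ w ∈ (p.map (algebraMap ℝ ℂ)).roots, ∃ r : ℝ, 0 < r ∧ w = (r : ℂ)) ∧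
      (p.map (algebraMap ℝ ℂ)).roots.Nodup := by
  -- `p` coincides with the explicit polynomial `sP n`
  have hPeval := sP_eval_T T hT0 hT1 hTrec n
  have hpP : p = sP n := by
    apply Polynomial.eq_of_infinite_eval_eq
    apply Set.Infinite.mono (s := Set.Ioi (0 : ℝ))
    · intro z hz
      show p.eval z = (sP n).eval z
      rw [hpe z hz, hPeval z hz]
    · exact Set.Ioi_infinite 0
  subst hpP
  cases n with
  | zero =>
      have h1 : sP 0 = 1 := rfl
      rw [h1]
      simp
  | succ m =>
      obtain ⟨r, q, hint, hr0, hfac1, -⟩ := sInv m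
      have hmono : StrictMono r :=
        Fin.strictMono_iff_lt_succ.mpr fun j => lt_trans (hint j).1 (hint j).2
      have hrpos : ∀ i, 0 < r i := fun i => lt_of_lt_of_le hr0 (hmono.monotone (Fin.zero_le i))
      rw [hfac1]
      have hmap : (∏ i : Fin (m + 1), (X - C (r i))).map (algebraMap ℝ ℂ)
          = ∏ i : Fin (m + 1), (X - C ((r i : ℂ))) := by
        rw [Polynomial.map_prod]
        simp
      rw [hmap]
      have hne : (∏ i : Fin (m + 1), (X - C ((r i : ℂ)))) ≠ 0 := by
        rw [Finset.prod_ne_zero_iff]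
        exact fun i _ => X_sub_C_ne_zero _
      have hroots : (∏ i : Fin (m + 1), (X - C ((r i : ℂ)))).roots
          = Finset.univ.val.map fun i : Fin (m + 1) => ((r i : ℝ) : ℂ) := by
        rw [Polynomial.roots_prod _ _ hne]
        simp [roots_X_sub_C, Multiset.bind_singleton]
      rw [hroots]
      constructor
      · intro w hw
        obtain ⟨i, _, rfl⟩ := Multiset.mem_map.mp hw
        exact ⟨r i, hrpos i, rfl⟩
      · refine Multiset.Nodup.map ?_ Finset.univ.nodup
        intro i j hij
        have : ((r i : ℝ) : ℂ) = ((r j : ℝ) : ℂ) := hij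
        exact hmono.injective (by exact_mod_cast this)
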